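/- Let ℒ = {0,1,...,s-1} and let K be a set of positive integers each at least s. If 𝒜 is an ℒ-intersecting family of subsets of {1,...,n} with |A| ∈ K for every A ∈ 𝒜, then |𝒜| ≤ C(n,s). -/

import Mathlib

theorem snevily_range (n s : ℕ) (K : Finset ℕ)
    (hK : ∀ k ∈ K, 0 < k ∧ s ≤ k)
    (𝒜 : Finset (Finset (Fin n)))
    (hsizes : ∀ A ∈ 𝒜, A.card ∈ K)
    (hintersecting : ∀ A ∈ 𝒜, ∀ B ∈ 𝒜, A ≠ B → (A ∩ B).card ∈ Finset.range s) :
    𝒜.card ≤ n.choose s := by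
  classical
  have hsub : ∀ A ∈ 𝒜, ∃ S ⊆ A, S.card = s := fun A hA =>
    Finset.exists_subset_card_eq (hK _ (hsizes A hA)).2
  choose f hf hfcard using hsub
  have hcard : (Finset.powersetCard s (Finset.univ : Finset (Fin n))).card = n.choose s := by
    simp [Finset.card_powersetCard]
  rw [← hcard]
  apply Finset.card_le_card_of_injOn (fun A => if h : A ∈ 𝒜 then f A h else ∅)
  · intro A hA
    simp only [Finset.mem_coe] at hA ⊢
    simp only [hA, dif_pos]
    rw [Finset.mem_powersetCard]
    exact ⟨Finset.subset_univ _, hfcard A hA⟩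
  · intro A hA B hB hEq
    simp only [Finset.mem_coe] at hA hB
    simp only [hA, hB, dif_pos] at hEq
    by_contra hne
    have h1 : f A hA ⊆ A ∩ B := by
      apply Finset.subset_inter (hf A hA)
      rw [hEq]; exact hf B hB
    have h2 := Finset.card_le_card h1
    rw [hfcard A hA] at h2
    have h3 := hintersecting A hA B hB hne
    rw [Finset.mem_range] at h3
    omega
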